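/- arXiv:2012.12470 — 3 statements merged into one kernel-verified Lean document; each statement's English description precedes it below -/
import Mathlib

section
/- Let A be a symmetric positive definite real 3×3 matrix, u ∈ ℝ³ a unit vector, γ > 0. Let R : ℝ → ℝ^{3×3}, θ : ℝ → ℝ, t₀ ∈ ℝ, ω ∈ ℝ³, v ∈ ℝ, and suppose R has derivative R(t₀)·ω^× at t₀ and θ has derivative v at t₀. Write R₀ := R(t₀), θ₀ := θ(t₀). Then the map t ↦ U(R(t),θ(t)) has derivative 2 ωᵀ Ra(θ₀,u) ψ(A·T(R₀,θ₀)) + v·(γθ₀ + 2 uᵀ ψ(A·T(R₀,θ₀))) at t₀. -/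
open Matrix

noncomputable section

abbrev M3 : Type := Matrix (Fin 3) (Fin 3) ℝ
abbrev V3 : Type := Fin 3 → ℝ

/-- skew-symmetric matrix associated to `x`: `skew x *ᵥ y = x ×₃ y`. -/
def skew (x : V3) : M3 :=
  !![0, -x 2, x 1; x 2, 0, -x 0; -x 1, x 0, 0]

/-- the special orthogonal group SO(3) as a subset of 3×3 matrices -/
def SO3 : Set M3 := {R | Rᵀ * R = 1 ∧ R.det = 1}

/-- Rodrigues formula -/
def Ra (θ : ℝ) (u : V3) : M3 :=
  1 + Real.sin θ • skew u + (1 - Real.cos θ) • (skew u * skew u)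

/-- `psi M = vec (P_a M)`, the vector part of the antisymmetric projection -/
def psi (M : M3) : V3 :=
  ![(M 2 1 - M 1 2) / 2, (M 0 2 - M 2 0) / 2, (M 1 0 - M 0 1) / 2]

/-- the angular-warping transformation `T(R,θ) = R · Ra(θ,u)` -/
def Tmap (u : V3) (R : M3) (θ : ℝ) : M3 := R * Ra θ u

/-- the potential function `U(R,θ)` on SO(3) × ℝ -/
def Ufun (A : M3) (u : V3) (γ : ℝ) (R : M3) (θ : ℝ) : ℝ :=
  (A * (1 - Tmap u R θ)).trace + γ / 2 * θ ^ 2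

/-- Euclidean norm on ℝ³ -/
def enorm3 (x : V3) : ℝ := Real.sqrt (x ⬝ᵥ x)

/-- Frobenius norm of a 3×3 matrix -/
def fnorm (M : M3) : ℝ := Real.sqrt ((Mᵀ * M).trace)

/-- `E(M) := (tr(M) I − Mᵀ)/2` -/
def Emap (M : M3) : M3 := (2⁻¹ : ℝ) • (M.trace • (1 : M3) - Mᵀ)

/-- `D_R(R,θ)` from Lemma 2 -/
def DR (A : M3) (u : V3) (R : M3) (θ : ℝ) : M3 :=
  Ra θ u * Emap (A * Tmap u R θ) * (Ra θ u)ᵀ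

/-- `D_θ(R,θ)` from Lemma 2 -/
def Dθ (A : M3) (u : V3) (R : M3) (θ : ℝ) : V3 :=
  (Ra θ u * Emap (A * Tmap u R θ)) *ᵥ u - skew (Ra θ u *ᵥ psi (A * Tmap u R θ)) *ᵥ u

/-- Δ(v,u) from the construction of the synergistic gap -/
def Delta (A : M3) (v u : V3) : ℝ :=
  u ⬝ᵥ ((A.trace • (1 : M3) - A - (2 * (v ⬝ᵥ A *ᵥ v)) • ((1 : M3) - vecMulVec v v)) *ᵥ u)

/-- `v` is a unit eigenvector of `A` -/
def IsUnitEigen (A : M3) (v : V3) : Prop :=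
  v ⬝ᵥ v = 1 ∧ ∃ lam : ℝ, A *ᵥ v = lam • v

/-- Ā := (tr(A) I − A)/2 -/
def Abar (A : M3) : M3 := (2⁻¹ : ℝ) • (A.trace • (1 : M3) - A)

/-- `lam` is an eigenvalue of `M` -/
def IsEigen (M : M3) (lam : ℝ) : Prop := ∃ w : V3, w ≠ 0 ∧ M *ᵥ w = lam • w
attribute [local instance] Matrix.normedAddCommGroup Matrix.normedSpace


set_option maxHeartbeats 4000000 in
private lemma trace_mul_skew (M : M3) (x : V3) :
    (M * skew x).trace = -2 * (x ⬝ᵥ psi M) := by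
  simp [Matrix.trace, Matrix.mul_apply, Fin.sum_univ_three, skew, psi, dotProduct, Matrix.diag]
  ring

private lemma skew_cube (x : V3) :
    skew x * skew x * skew x = -((x ⬝ᵥ x) • skew x) := by
  ext i j
  fin_cases i <;> fin_cases j <;>
    simp [skew, Matrix.mul_apply, Fin.sum_univ_three, dotProduct] <;> ring

set_option maxHeartbeats 4000000 in
private lemma psi_conj (θ : ℝ) (u : V3) (hu : u ⬝ᵥ u = 1) (N : M3) :
    psi (Ra θ u * N) = Ra θ u *ᵥ psi (N * Ra θ u) := by
  have h1 : u 0 * u 0 + u 1 * u 1 + u 2 * u 2 = 1 := by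
    simpa [dotProduct, Fin.sum_univ_three] using hu
  have h2 : Real.sin θ * Real.sin θ + Real.cos θ * Real.cos θ = 1 := by
    have := Real.sin_sq_add_cos_sq θ; nlinarith [this]
  funext i
  fin_cases i <;>
    simp [Ra, skew, psi, Matrix.mul_apply, Matrix.mulVec, dotProduct,
      Fin.sum_univ_three, Matrix.one_apply, Matrix.smul_apply, Matrix.add_apply, smul_eq_mul]
  · linear_combination ((-1/2) * (u 2)^2 * (N 2 1) + (1) * (u 2)^2 * (Real.cos (θ)) * (N 2 1) + (-1/2) * (u 2)^2 * (Real.cos (θ))^2 * (N 2 1) + (1/2) * (u 1) * (u 2) * (N 2 2) + (-1/2) * (u 1) * (u 2) * (N 1 1) + (-1) * (u 1) * (u 2) * (Real.cos (θ)) * (N 2 2) + (1) * (u 1) * (u 2) * (Real.cos (θ)) * (N 1 1) + (1/2) * (u 1) * (u 2) * (Real.cos (θ))^2 * (N 2 2) + (-1/2) * (u 1) * (u 2) * (Real.cos (θ))^2 * (N 1 1) + (1/2) * (u 1)^2 * (N 1 2) + (-1) * (u 1)^2 * (Real.cos (θ)) * (N 1 2) + (1/2) * (u 1)^2 * (Real.cos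 (θ))^2 * (N 1 2) + (-1/2) * (u 0) * (u 2) * (N 0 1) + (1) * (u 0) * (u 2) * (Real.cos (θ)) * (N 0 1) + (-1/2) * (u 0) * (u 2) * (Real.cos (θ))^2 * (N 0 1) + (1/2) * (u 0) * (u 1) * (N 0 2) + (-1) * (u 0) * (u 1) * (Real.cos (θ)) * (N 0 2) + (1/2) * (u 0) * (u 1) * (Real.cos (θ))^2 * (N 0 2)) * h1 + ((-1/2) * (u 2)^2 * (N 2 1) + (1/2) * (u 1) * (u 2) * (N 2 2) + (-1/2) * (u 1) * (u 2) * (N 1 1) + (1/2) * (u 1)^2 * (N 1 2) + (-1/2) * (u 0) * (u 2) * (N 0 1) + (1/2) * (u 0) * (u 1) * (N 0 2)) * h2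
  · linear_combination ((1/2) * (N 0 2) + (-1/2) * (Real.cos (θ))^2 * (N 0 2) + (-1/2) * (Real.sin (θ))^2 * (N 0 2) + (1/2) * (u 2)^2 * (N 2 0) + (-1) * (u 2)^2 * (Real.cos (θ)) * (N 2 0) + (1/2) * (u 2)^2 * (Real.cos (θ))^2 * (N 2 0) + (1/2) * (u 1) * (u 2) * (N 1 0) + (-1) * (u 1) * (u 2) * (Real.cos (θ)) * (N 1 0) + (1/2) * (u 1) * (u 2) * (Real.cos (θ))^2 * (N 1 0) + (-1/2) * (u 0) * (u 2) * (N 2 2) + (1/2) * (u 0) * (u 2) * (N 0 0) + (1) * (u 0) * (u 2) * (Real.cos (θ)) * (N 2 2) + (-1) * (u 0) * (u 2) * (Real.cos (θ)) * (N 0 0) + (-1/2) * (u 0) * (u 2) * (Real.cos (θ))^2 * (N 2 2) + (1/2) * (u 0) * (u 2) * (Real.cos (θ))^2 * (N 0 0) + (-1/2) * (u 0) * (u 1) * (N 1 2) + (1) * (u 0) * (u 1) * (Real.cos (θ)) * (N 1 2) + (-1/2) * (u 0) * (u 1) * (Real.cos (θ))^2 * (N 1 2) + (-1/2) * (u 0)^2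 * (N 0 2) + (1) * (u 0)^2 * (Real.cos (θ)) * (N 0 2) + (-1/2) * (u 0)^2 * (Real.cos (θ))^2 * (N 0 2)) * h1 + ((-1/2) * (N 0 2) + (1/2) * (u 2)^2 * (N 2 0) + (1/2) * (u 2)^2 * (N 0 2) + (1/2) * (u 1) * (u 2) * (N 1 0) + (1/2) * (u 1)^2 * (N 0 2) + (-1/2) * (u 0) * (u 2) * (N 2 2) + (1/2) * (u 0) * (u 2) * (N 0 0) + (-1/2) * (u 0) * (u 1) * (N 1 2)) * h2
  · linear_combination ((-1/2) * (N 0 1) + (1/2) * (Real.cos (θ))^2 * (N 0 1) + (1/2) * (Real.sin (θ))^2 * (N 0 1) + (-1/2) * (u 1) * (u 2) * (N 2 0) + (1) * (u 1) * (u 2) * (Real.cos (θ)) * (N 2 0) + (-1/2) * (u 1) * (u 2) * (Real.cos (θ))^2 * (N 2 0) + (-1/2) * (u 1)^2 * (N 1 0) + (1) * (u 1)^2 * (Real.cos (θ)) * (N 1 0) + (-1/2) * (u 1)^2 * (Real.cos (θ))^2 * (N 1 0) + (1/2) * (u 0) * (u 2) * (N 2 1) + (-1) * (u 0) * (u 2)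 * (Real.cos (θ)) * (N 2 1) + (1/2) * (u 0) * (u 2) * (Real.cos (θ))^2 * (N 2 1) + (1/2) * (u 0) * (u 1) * (N 1 1) + (-1/2) * (u 0) * (u 1) * (N 0 0) + (-1) * (u 0) * (u 1) * (Real.cos (θ)) * (N 1 1) + (1) * (u 0) * (u 1) * (Real.cos (θ)) * (N 0 0) + (1/2) * (u 0) * (u 1) * (Real.cos (θ))^2 * (N 1 1) + (-1/2) * (u 0) * (u 1) * (Real.cos (θ))^2 * (N 0 0) + (1/2) * (u 0)^2 * (N 0 1) + (-1) * (u 0)^2 * (Real.cos (θ)) * (N 0 1) + (1/2) * (u 0)^2 * (Real.cos (θ))^2 * (N 0 1)) * h1 + ((1/2) * (N 0 1) + (-1/2) * (u 2)^2 * (N 0 1) + (-1/2) * (u 1) * (u 2) * (N 2 0) + (-1/2) * (u 1)^2 * (N 1 0) + (-1/2) * (u 1)^2 * (N 0 1) + (1/2) * (u 0) * (u 2) * (N 2 1) + (1/2) * (u 0) * (u 1) * (N 1 1) + (-1/2) * (u 0) * (u 1) * (N 0 0)) * h2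

private lemma Ra_mul_skew (θ : ℝ) (u : V3) (hu : u ⬝ᵥ u = 1) :
    Ra θ u * skew u = Real.cos θ • skew u + Real.sin θ • (skew u * skew u) := by
  have h3 : skew u * skew u * skew u = -skew u := by
    rw [skew_cube, hu, one_smul]
  have expand : Ra θ u * skew u
      = skew u + Real.sin θ • (skew u * skew u)
        + (1 - Real.cos θ) • (skew u * skew u * skew u) := by
    simp [Ra, add_mul, smul_mul_assoc, mul_assoc]
  rw [expand, h3]
  module





theorem deriv_of_U
    (A : M3) (hA : A.PosDef) (u : V3) (hu : u ⬝ᵥ u = 1) (γ : ℝ) (hγ : 0 < γ)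
    (R : ℝ → M3) (θ : ℝ → ℝ) (t₀ : ℝ) (ω : V3) (v : ℝ)
    (hR : HasDerivAt R (R t₀ * skew ω) t₀) (hθ : HasDerivAt θ v t₀) :
    HasDerivAt (fun t => Ufun A u γ (R t) (θ t))
      (2 * (ω ⬝ᵥ (Ra (θ t₀) u *ᵥ psi (A * Tmap u (R t₀) (θ t₀)))) +
        v * (γ * θ t₀ + 2 * (u ⬝ᵥ psi (A * Tmap u (R t₀) (θ t₀))))) t₀ := by
  have hRent : ∀ j k : Fin 3, HasDerivAt (fun t => R t j k) ((R t₀ * skew ω) j k) t₀ :=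
    fun j k => hasDerivAt_pi.mp (hasDerivAt_pi.mp hR j) k
  have hsin : HasDerivAt (fun t => Real.sin (θ t)) (Real.cos (θ t₀) * v) t₀ :=
    (Real.hasDerivAt_sin (θ t₀)).comp t₀ hθ
  have hcos : HasDerivAt (fun t => Real.cos (θ t)) (-Real.sin (θ t₀) * v) t₀ :=
    (Real.hasDerivAt_cos (θ t₀)).comp t₀ hθ
  have hRaent : ∀ k i : Fin 3, HasDerivAt (fun t => Ra (θ t) u k i)
      (v * (Real.cos (θ t₀) * skew u k i + Real.sin (θ t₀) * (skew u * skew u) k i)) t₀ := by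
    intro k i
    have hfun : (fun t => Ra (θ t) u k i) = fun t =>
        (1 : M3) k i + Real.sin (θ t) * skew u k i
          + (1 - Real.cos (θ t)) * (skew u * skew u) k i := by
      funext t; simp [Ra, Matrix.add_apply, Matrix.smul_apply, smul_eq_mul]
    rw [hfun]
    have h := ((hasDerivAt_const t₀ ((1 : M3) k i)).add (hsin.mul_const (skew u k i))).add
      (((hasDerivAt_const t₀ (1 : ℝ)).sub hcos).mul_const ((skew u * skew u) k i))
    convert h using 1
    · rfl
    · rfl
    · rfl
    ring
  have hsum : HasDerivAt (fun t => ∑ i : Fin 3, ∑ j : Fin 3, ∑ k : Fin 3,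
      A i j * (R t j k * Ra (θ t) u k i))
      (∑ i : Fin 3, ∑ j : Fin 3, ∑ k : Fin 3,
        A i j * ((R t₀ * skew ω) j k * Ra (θ t₀) u k i +
          R t₀ j k * (v * (Real.cos (θ t₀) * skew u k i
            + Real.sin (θ t₀) * (skew u * skew u) k i)))) t₀ :=
    HasDerivAt.fun_sum fun i _ => HasDerivAt.fun_sum fun j _ => HasDerivAt.fun_sum fun k _ =>
      ((hRent j k).mul (hRaent k i)).const_mul _
  have hθ2 : HasDerivAt (fun t => γ / 2 * θ t ^ 2) (γ / 2 * ((2 : ℕ) * θ t₀ ^ 1 * v)) t₀ :=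
    (hθ.pow 2).const_mul _
  have hU : (fun t => Ufun A u γ (R t) (θ t)) = fun t =>
      A.trace - (∑ i : Fin 3, ∑ j : Fin 3, ∑ k : Fin 3,
        A i j * (R t j k * Ra (θ t) u k i)) + γ / 2 * θ t ^ 2 := by
    funext t
    simp [Ufun, Tmap, Matrix.trace, Matrix.mul_apply, Fin.sum_univ_three, Matrix.diag,
      Matrix.sub_apply, Matrix.one_apply]
    ring
  rw [hU]
  have hD := ((hasDerivAt_const t₀ A.trace).sub hsum).add hθ2
  convert hD using 1
  · rfl
  · rfl
  · rfl
  have key : (∑ i : Fin 3, ∑ j : Fin 3, ∑ k : Fin 3,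
      A i j * ((R t₀ * skew ω) j k * Ra (θ t₀) u k i +
        R t₀ j k * (v * (Real.cos (θ t₀) * skew u k i
          + Real.sin (θ t₀) * (skew u * skew u) k i))))
      = (A * (R t₀ * skew ω) * Ra (θ t₀) u).trace
        + v * (A * R t₀ * (Real.cos (θ t₀) • skew u
            + Real.sin (θ t₀) • (skew u * skew u))).trace := by
    simp [Matrix.trace, Matrix.mul_apply, Fin.sum_univ_three, Matrix.diag,
      Matrix.add_apply, Matrix.smul_apply, smul_eq_mul]
    ring
  have e2 : (A * (R t₀ * skew ω) * Ra (θ t₀) u).trace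
      = -2 * (ω ⬝ᵥ (Ra (θ t₀) u *ᵥ psi (A * Tmap u (R t₀) (θ t₀)))) := by
    rw [Matrix.trace_mul_comm]
    have : Ra (θ t₀) u * (A * (R t₀ * skew ω)) = Ra (θ t₀) u * (A * R t₀) * skew ω := by
      noncomm_ring
    rw [this, trace_mul_skew, psi_conj (θ t₀) u hu (A * R t₀)]
    have : A * R t₀ * Ra (θ t₀) u = A * Tmap u (R t₀) (θ t₀) := by
      rw [Tmap, mul_assoc]
    rw [this]
  have e3 : (A * R t₀ * (Real.cos (θ t₀) • skew u
      + Real.sin (θ t₀) • (skew u * skew u))).trace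
      = -2 * (u ⬝ᵥ psi (A * Tmap u (R t₀) (θ t₀))) := by
    rw [← Ra_mul_skew (θ t₀) u hu]
    have : A * R t₀ * (Ra (θ t₀) u * skew u) = A * Tmap u (R t₀) (θ t₀) * skew u := by
      rw [Tmap]; noncomm_ring
    rw [this, trace_mul_skew]
  rw [key, e2, e3]
  push_cast
  ring
end
end

section
/- Let A be a symmetric positive definite real 3×3 matrix, u ∈ ℝ³ a unit vector, γ > 0, R ∈ SO(3) and θ ∈ ℝ. Then the two conditions ψ(A·T(R,θ)) = 0 and γθ + 2 uᵀ ψ(A·T(R,θ)) = 0 hold simultaneously if and only if θ = 0 and either R = I₃ or R = Ra(π,v) for some unit vector v that is an eigenvector of A. (In other words, the set of critical points of U is Ψ_V × {0}, where Ψ_V = {I₃} ∪ Ra(π, E(A)) and E(A) is the set of unit eigenvectors of A.) -/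
open Matrix

noncomputable section

lemma herm_iff (M : M3) : M.IsHermitian ↔ Mᵀ = M := by
  rw [Matrix.IsHermitian, Matrix.conjTranspose_eq_transpose_of_trivial]

lemma psi_eq_zero_iff (M : M3) : psi M = 0 ↔ Mᵀ = M := by
  constructor
  · intro h
    have h0 := congrFun h 0
    have h1 := congrFun h 1
    have h2 := congrFun h 2
    simp [psi] at h0 h1 h2
    ext i j
    fin_cases i <;> fin_cases j <;> simp [Matrix.transpose_apply] <;> linarith
  · intro h
    have key : ∀ a b : Fin 3, M b a = M a b := fun a b => by
      simpa [Matrix.transpose_apply] using congrFun (congrFun h a) b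
    funext i
    fin_cases i <;>
      simp [psi, key 1 2, key 0 2, key 0 1]

lemma skew_mul_skew (v : V3) :
    skew v * skew v = vecMulVec v v - (v ⬝ᵥ v) • (1 : M3) := by
  ext i j
  fin_cases i <;> fin_cases j <;>
    simp [skew, Matrix.mul_apply, Fin.sum_univ_three, vecMulVec_apply, dotProduct,
      Matrix.one_apply] <;> ring

lemma Ra_zero (u : V3) : Ra 0 u = 1 := by
  simp [Ra]

lemma Ra_pi (v : V3) (hv : v ⬝ᵥ v = 1) :
    Ra Real.pi v = (2:ℝ) • vecMulVec v v - 1 := by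
  rw [Ra, Real.sin_pi, Real.cos_pi, skew_mul_skew, hv]
  norm_num
  module

lemma vecMulVec_mulVec' (a b c : V3) : vecMulVec a b *ᵥ c = (b ⬝ᵥ c) • a := by
  funext i
  simp [Matrix.mulVec, dotProduct, vecMulVec_apply, Fin.sum_univ_three]
  ring

lemma mul_vecMulVec (M : M3) (a b : V3) :
    M * vecMulVec a b = vecMulVec (M *ᵥ a) b := by
  ext i j
  simp [Matrix.mul_apply, vecMulVec_apply, Matrix.mulVec, dotProduct, Fin.sum_univ_three]
  ring

lemma transpose_vecMulVec (a : V3) : (vecMulVec a a)ᵀ = vecMulVec a a := by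
  ext i j
  simp [vecMulVec_apply, mul_comm]

lemma sandwich {G : Type*} [Monoid G] {a b : G} (h : b * a = 1) (d e : G) :
    (a * d * b) * (a * e * b) = a * (d * e) * b := by
  have hb : b * (a * e * b) = e * b := by
    rw [← mul_assoc, ← mul_assoc, h, one_mul]
  rw [mul_assoc (a * d) b, hb, ← mul_assoc, mul_assoc a d e]

lemma spec_real {B : M3} (hB : B.IsHermitian) :
    B = (hB.eigenvectorUnitary : M3) * diagonal hB.eigenvalues *
      star (hB.eigenvectorUnitary : M3) := by
  have h := hB.spectral_theorem
  have : (RCLike.ofReal ∘ hB.eigenvalues : Fin 3 → ℝ) = hB.eigenvalues := by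
    funext i; simp
  rwa [this] at h

lemma commute_of_sq {A B : M3} (hA : A.PosSemidef) (hB : B.IsHermitian)
    (h : B * B = A * A) : A * B = B * A := by
  set U : M3 := (hB.eigenvectorUnitary : M3) with hUdef
  have hU1 : star U * U = 1 := Matrix.mem_unitaryGroup_iff'.mp hB.eigenvectorUnitary.2
  have hspec : B = U * diagonal hB.eigenvalues * star U := spec_real hB
  set d := hB.eigenvalues with hd
  set C : M3 := U * diagonal (fun i => |d i|) * star U with hC
  have hCps : C.PosSemidef := by
    rw [hC, Matrix.star_eq_conjTranspose]
    exact Matrix.PosSemidef.mul_mul_conjTranspose_same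
      (Matrix.posSemidef_diagonal_iff.mpr fun i => abs_nonneg _) U
  have habs : (fun i => |d i| * |d i|) = fun i => d i * d i := by
    funext i; simp [abs_mul_abs_self]
  have hCC : C * C = A * A := by
    rw [hC, sandwich hU1, diagonal_mul_diagonal, habs, ← diagonal_mul_diagonal,
      ← sandwich hU1, ← hspec, h]
  have hAC : A = C := (open scoped MatrixOrder in (CFC.sq_eq_sq_iff A C hA.nonneg hCps.nonneg).mp) (by rw [pow_two, pow_two, hCC])
  rw [hAC, hC, hspec, sandwich hU1, sandwich hU1, diagonal_mul_diagonal,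
    diagonal_mul_diagonal]
  have : (fun i => |d i| * d i) = fun i => d i * |d i| := funext fun i => mul_comm _ _
  rw [this]
lemma dfun_helper (d : Fin 3 → ℝ) (i : Fin 3) (hi : d i = 1)
    (ho : ∀ j, j ≠ i → d j = -1) :
    d = fun j => 2 * Pi.single i (1:ℝ) j - 1 := by
  funext j
  by_cases hj : j = i
  · subst hj; rw [Pi.single_eq_same, hi]; norm_num
  · rw [Pi.single_eq_of_ne hj, ho j hj]; norm_num

lemma key_lemma (A R : M3) (hA : A.PosDef) (hRo : Rᵀ * R = 1) (hdet : R.det = 1)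
    (hsym : (A * R)ᵀ = A * R) :
    R = 1 ∨ ∃ v : V3, IsUnitEigen A v ∧ R = (2:ℝ) • vecMulVec v v - 1 := by
  have hAt : Aᵀ = A := by
    rw [← Matrix.conjTranspose_eq_transpose_of_trivial]; exact hA.1
  have hRRt : R * Rᵀ = 1 := mul_eq_one_comm.mp hRo
  have hBsym' : Rᵀ * A = A * R := by rw [← hsym, Matrix.transpose_mul, hAt]
  have hBB : (A * R) * (A * R) = A * A := by
    calc (A * R) * (A * R) = (A * R) * (Rᵀ * A) := by rw [hBsym']
      _ = A * ((R * Rᵀ) * A) := by simp only [Matrix.mul_assoc]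
      _ = A * A := by rw [hRRt, Matrix.one_mul]
  have hBh : (A * R).IsHermitian := (herm_iff _).mpr hsym
  have hcomm : A * (A * R) = (A * R) * A := commute_of_sq hA.posSemidef hBh hBB
  have hdA : IsUnit A.det := (hA.det_pos).ne'.isUnit
  have hAinv : A⁻¹ * A = 1 := Matrix.nonsing_inv_mul A hdA
  have hAinv' : A * A⁻¹ = 1 := Matrix.mul_nonsing_inv A hdA
  have hcancel : ∀ X Y : M3, A * X = A * Y → X = Y := by
    intro X Y hXY
    have := congrArg (fun Z => A⁻¹ * Z) hXY
    simpa [← Matrix.mul_assoc, hAinv] using this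
  have hcancelR : ∀ X Y : M3, X * A = Y * A → X = Y := by
    intro X Y hXY
    have := congrArg (fun Z => Z * A⁻¹) hXY
    simpa [Matrix.mul_assoc, hAinv'] using this
  have hRA : R * A = A * R := by
    apply hcancel
    calc A * (R * A) = (A * R) * A := by rw [Matrix.mul_assoc]
      _ = A * (A * R) := by rw [← hcomm]
  have hRsym : Rᵀ = R := by
    apply hcancelR
    rw [hBsym', ← hRA]
  have hR2 : R * R = 1 := by rw [hRsym] at hRo; exact hRo
  have hRh : R.IsHermitian := (herm_iff R).mpr hRsym
  set U : M3 := (hRh.eigenvectorUnitary : M3) with hUdef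
  have hU1 : star U * U = 1 := Matrix.mem_unitaryGroup_iff'.mp hRh.eigenvectorUnitary.2
  have hU2 : U * star U = 1 := Matrix.mem_unitaryGroup_iff.mp hRh.eigenvectorUnitary.2
  have hspec : R = U * diagonal hRh.eigenvalues * star U := spec_real hRh
  set d := hRh.eigenvalues with hd
  have hdiag : diagonal (fun i => d i * d i) = (1 : M3) := by
    have h2 : U * diagonal (fun i => d i * d i) * star U = 1 := by
      have : R * R = U * diagonal (fun i => d i * d i) * star U := by
        rw [hspec, sandwich hU1, diagonal_mul_diagonal]
      rw [← this, hR2]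
    calc diagonal (fun i => d i * d i)
        = (star U * U) * diagonal (fun i => d i * d i) * (star U * U) := by
          rw [hU1]; simp
      _ = star U * (U * diagonal (fun i => d i * d i) * star U) * U := by
          simp [Matrix.mul_assoc]
      _ = 1 := by rw [h2, Matrix.mul_one, hU1]
  have hd2 : ∀ i, d i = 1 ∨ d i = -1 := by
    intro i
    have := congrFun (congrFun hdiag i) i
    simp [Matrix.diagonal_apply_eq, Matrix.one_apply_eq] at this
    exact mul_self_eq_one_iff.mp this
  have hprod : d 0 * d 1 * d 2 = 1 := by
    have h := hRh.det_eq_prod_eigenvalues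
    rw [hdet, Fin.prod_univ_three] at h
    have : (1:ℝ) = d 0 * d 1 * d 2 := by exact_mod_cast h
    linarith
  by_cases hall : ∀ i, d i = 1
  · left
    have hd1 : diagonal d = (1 : M3) := by
      have : d = fun _ => 1 := funext hall
      rw [this]; exact Matrix.diagonal_one
    rw [hspec, hd1, Matrix.mul_one, hU2]
  · right
    obtain ⟨i, hdfun⟩ : ∃ i, d = fun j => 2 * Pi.single i (1:ℝ) j - 1 := by
      rcases hd2 0 with h0 | h0 <;> rcases hd2 1 with h1 | h1 <;> rcases hd2 2 with h2 | h2
      · exact absurd (fun i => by fin_cases i <;> assumption) hall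
      · exfalso; rw [h0, h1, h2] at hprod; norm_num at hprod
      · exfalso; rw [h0, h1, h2] at hprod; norm_num at hprod
      · refine ⟨0, dfun_helper d 0 h0 fun j hj => ?_⟩
        have hj2 : j = 1 ∨ j = 2 := by omega
        rcases hj2 with rfl | rfl
        · exact h1
        · exact h2
      · exfalso; rw [h0, h1, h2] at hprod; norm_num at hprod
      · refine ⟨1, dfun_helper d 1 h1 fun j hj => ?_⟩
        have hj2 : j = 0 ∨ j = 2 := by omega
        rcases hj2 with rfl | rfl
        · exact h0
        · exact h2
      · refine ⟨2, dfun_helper d 2 h2 fun j hj => ?_⟩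
        have hj2 : j = 0 ∨ j = 1 := by omega
        rcases hj2 with rfl | rfl
        · exact h0
        · exact h1
      · exfalso; rw [h0, h1, h2] at hprod; norm_num at hprod
    set v : V3 := fun j => U j i with hvdef
    have hvv : v ⬝ᵥ v = 1 := by
      have := congrFun (congrFun hU1 i) i
      simpa [Matrix.mul_apply, Matrix.one_apply_eq, dotProduct, Fin.sum_univ_three,
        Matrix.star_apply, hvdef] using this
    have hproj : U * diagonal (Pi.single i 1) * star U = vecMulVec v v := by
      ext a b
      rw [Matrix.mul_apply]
      rw [Finset.sum_eq_single i]
      · simp [Matrix.mul_diagonal, Matrix.star_apply, vecMulVec_apply, hvdef, mul_comm]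
      · intro k _ hk
        simp [Matrix.mul_diagonal, Pi.single_apply, hk]
      · intro h; exact absurd (Finset.mem_univ i) h
    have hdd : diagonal d = (2:ℝ) • diagonal (Pi.single i 1) - 1 := by
      rw [hdfun]
      ext a b
      by_cases hab : a = b
      · subst hab
        simp [Matrix.diagonal_apply_eq, Matrix.one_apply_eq]
      · simp [Matrix.diagonal_apply_ne _ hab, Matrix.one_apply_ne hab]
    have hReq : R = (2:ℝ) • vecMulVec v v - 1 := by
      rw [hspec, hdd, Matrix.mul_sub, Matrix.mul_one, Matrix.mul_smul, Matrix.sub_mul,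
        Matrix.smul_mul, hproj, hU2]
    refine ⟨v, ⟨hvv, ?_⟩, hReq⟩
    have hRv : R *ᵥ v = v := by
      rw [hReq, Matrix.sub_mulVec, Matrix.smul_mulVec, vecMulVec_mulVec', hvv,
        Matrix.one_mulVec, one_smul]
      funext j; simp [two_smul]
    have hAx : R *ᵥ (A *ᵥ v) = A *ᵥ v := by
      rw [Matrix.mulVec_mulVec, hRA, ← Matrix.mulVec_mulVec, hRv]
    refine ⟨v ⬝ᵥ (A *ᵥ v), ?_⟩
    have hexp : (2:ℝ) • ((v ⬝ᵥ (A *ᵥ v)) • v) - A *ᵥ v = A *ᵥ v := by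
      have h := hAx
      rw [hReq, Matrix.sub_mulVec, Matrix.one_mulVec, Matrix.smul_mulVec,
        vecMulVec_mulVec'] at h
      exact h
    have h2 : (2:ℝ) • ((v ⬝ᵥ (A *ᵥ v)) • v) = (2:ℝ) • (A *ᵥ v) := by
      have := hexp
      rw [sub_eq_iff_eq_add] at this
      rw [this, two_smul]
    have := smul_right_injective V3 (two_ne_zero (α := ℝ)) h2
    exact this.symm

theorem critical_points_of_U
    (A : M3) (hA : A.PosDef) (u : V3) (hu : u ⬝ᵥ u = 1) (γ : ℝ) (hγ : 0 < γ)
    (R : M3) (hR : R ∈ SO3) (θ : ℝ) :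
    (psi (A * Tmap u R θ) = 0 ∧ γ * θ + 2 * (u ⬝ᵥ psi (A * Tmap u R θ)) = 0) ↔
      (θ = 0 ∧ (R = 1 ∨ ∃ v : V3, IsUnitEigen A v ∧ R = Ra Real.pi v)) := by
  have hAt : Aᵀ = A := by
    rw [← Matrix.conjTranspose_eq_transpose_of_trivial]; exact hA.1
  constructor
  · rintro ⟨h1, h2⟩
    have hθ : θ = 0 := by
      rw [h1] at h2
      simp only [dotProduct_zero, mul_zero, add_zero] at h2
      exact (mul_eq_zero.mp h2).resolve_left hγ.ne'
    subst hθ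
    rw [Tmap, Ra_zero, Matrix.mul_one] at h1
    have hsym := (psi_eq_zero_iff _).mp h1
    rcases key_lemma A R hA hR.1 hR.2 hsym with h | ⟨v, hv, hres⟩
    · exact ⟨rfl, Or.inl h⟩
    · exact ⟨rfl, Or.inr ⟨v, hv, by rw [hres, Ra_pi v hv.1]⟩⟩
  · rintro ⟨hθ, hcase⟩
    subst hθ
    have hT : Tmap u R 0 = R := by rw [Tmap, Ra_zero, Matrix.mul_one]
    have hpsi : psi (A * R) = 0 := by
      apply (psi_eq_zero_iff _).mpr
      rcases hcase with rfl | ⟨v, ⟨hv1, lam, hlam⟩, rfl⟩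
      · rw [Matrix.mul_one]; exact hAt
      · rw [Ra_pi v hv1, Matrix.mul_sub, Matrix.mul_one, Matrix.mul_smul, _root_.mul_vecMulVec,
          hlam]
        have hvlv : vecMulVec (lam • v) v = lam • vecMulVec v v := by
          ext a b; simp [vecMulVec_apply, Pi.smul_apply, mul_assoc]
        rw [hvlv, Matrix.transpose_sub, Matrix.transpose_smul, Matrix.transpose_smul,
          transpose_vecMulVec, hAt]
    rw [hT]
    refine ⟨hpsi, by rw [hpsi]; simp⟩
end
end

section
/- Let A be a symmetric real 3×3 matrix with eigenvalues 0 < λ₁ < λ₂ < λ₃ satisfying λ₂ < λ₁λ₃/(λ₃ − λ₁), and a corresponding orthonormal basis of eigenvectors v₁, v₂, v₃. Let u = α₁v₁ + α₂v₂ + α₃v₃ where, for each i and with {i,j,k} = {1,2,3}, αᵢ² = 1 − 2λⱼλₖ/(λ₁λ₂ + λ₁λ₃ + λ₂λ₃). Then for every unit eigenvector v of A, Δ(v,u) ≥ 2λ₁λ₂λ₃/(λ₁λ₂ + λ₁λ₃ + λ₂λ₃). -/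
open Matrix

noncomputable section

lemma vmv_mulVec (x y z : V3) : vecMulVec x y *ᵥ z = (y ⬝ᵥ z) • x := by
  ext i; simp [vecMulVec_apply, mulVec, dotProduct, Fin.sum_univ_three]; ring

lemma sym_dot (A : M3) (x y : V3) : x ⬝ᵥ (A *ᵥ y) = (Aᵀ *ᵥ x) ⬝ᵥ y := by
  simp [mulVec, dotProduct, Fin.sum_univ_three, Matrix.transpose_apply]; ring

lemma completeness (v1 v2 v3 : V3)
    (hn1 : v1 ⬝ᵥ v1 = 1) (hn2 : v2 ⬝ᵥ v2 = 1) (hn3 : v3 ⬝ᵥ v3 = 1)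
    (ho12 : v1 ⬝ᵥ v2 = 0) (ho13 : v1 ⬝ᵥ v3 = 0) (ho23 : v2 ⬝ᵥ v3 = 0) :
    vecMulVec v1 v1 + vecMulVec v2 v2 + vecMulVec v3 v3 = 1 := by
  have hV : (Matrix.of ![v1, v2, v3]) * (Matrix.of ![v1, v2, v3])ᵀ = 1 := by
    ext i j
    simp only [Matrix.mul_apply, Matrix.transpose_apply, Matrix.of_apply]
    fin_cases i <;> fin_cases j <;>
      simp_all [dotProduct, Fin.sum_univ_three, Matrix.one_apply, mul_comm]
  have hV2 := mul_eq_one_comm.mp hV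
  ext i j
  have := congrFun (congrFun hV2 i) j
  simp only [Matrix.mul_apply, Matrix.transpose_apply, Fin.sum_univ_three, Matrix.of_apply,
    Matrix.cons_val_zero, Matrix.cons_val_one, Matrix.head_cons, Matrix.cons_val_two,
    Matrix.tail_cons] at this
  simp only [Matrix.add_apply, vecMulVec_apply]
  rw [← this]

lemma Delta_expand (A : M3) (v u : V3) :
    Delta A v u = A.trace * (u ⬝ᵥ u) - u ⬝ᵥ (A *ᵥ u)
      - 2 * (v ⬝ᵥ A *ᵥ v) * ((u ⬝ᵥ u) - (v ⬝ᵥ u) * (v ⬝ᵥ u)) := by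
  unfold Delta
  rw [sub_mulVec, sub_mulVec, smul_mulVec, smul_mulVec, one_mulVec, sub_mulVec,
    one_mulVec, vmv_mulVec]
  simp only [dotProduct_sub, dotProduct_smul, smul_eq_mul]
  rw [dotProduct_comm v u]

set_option maxHeartbeats 1600000 in
theorem Delta_lower_bound_case3
    (A : M3) (hA : A.IsSymm) (lam1 lam2 lam3 : ℝ) (v1 v2 v3 : V3)
    (hv1 : A *ᵥ v1 = lam1 • v1) (hv2 : A *ᵥ v2 = lam2 • v2) (hv3 : A *ᵥ v3 = lam3 • v3)
    (hn1 : v1 ⬝ᵥ v1 = 1) (hn2 : v2 ⬝ᵥ v2 = 1) (hn3 : v3 ⬝ᵥ v3 = 1)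
    (ho12 : v1 ⬝ᵥ v2 = 0) (ho13 : v1 ⬝ᵥ v3 = 0) (ho23 : v2 ⬝ᵥ v3 = 0)
    (hpos : 0 < lam1) (hlt12 : lam1 < lam2) (hlt23 : lam2 < lam3)
    (hcase : lam2 < lam1 * lam3 / (lam3 - lam1))
    (α1 α2 α3 : ℝ)
    (hα1 : α1 ^ 2 = 1 - 2 * lam2 * lam3 / (lam1 * lam2 + lam1 * lam3 + lam2 * lam3))
    (hα2 : α2 ^ 2 = 1 - 2 * lam1 * lam3 / (lam1 * lam2 + lam1 * lam3 + lam2 * lam3))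
    (hα3 : α3 ^ 2 = 1 - 2 * lam1 * lam2 / (lam1 * lam2 + lam1 * lam3 + lam2 * lam3))
    (u : V3) (hu : u = α1 • v1 + α2 • v2 + α3 • v3) :
    ∀ v : V3, IsUnitEigen A v →
      Delta A v u ≥ 2 * lam1 * lam2 * lam3 / (lam1 * lam2 + lam1 * lam3 + lam2 * lam3) := by
  have hSpos : 0 < lam1 * lam2 + lam1 * lam3 + lam2 * lam3 := by nlinarith
  have hS : lam1 * lam2 + lam1 * lam3 + lam2 * lam3 ≠ 0 := hSpos.ne'
  have hP := completeness v1 v2 v3 hn1 hn2 hn3 ho12 ho13 ho23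
  -- trace of A
  have hAmat : A = lam1 • vecMulVec v1 v1 + lam2 • vecMulVec v2 v2 + lam3 • vecMulVec v3 v3 := by
    have hmul : ∀ (x y : V3), A * vecMulVec x y = vecMulVec (A *ᵥ x) y := by
      intro x y
      ext i j
      simp [Matrix.mul_apply, vecMulVec_apply, mulVec, dotProduct, Fin.sum_univ_three]
      ring
    have hsmul : ∀ (c : ℝ) (x y : V3), vecMulVec (c • x) y = c • vecMulVec x y := by
      intro c x y; ext i j; simp [vecMulVec_apply]; ring
    calc A = A * 1 := by rw [mul_one]
      _ = A * (vecMulVec v1 v1 + vecMulVec v2 v2 + vecMulVec v3 v3) := by rw [hP]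
      _ = _ := by
        rw [mul_add, mul_add, hmul, hmul, hmul, hv1, hv2, hv3, hsmul, hsmul, hsmul]
  have htrv : ∀ x : V3, Matrix.trace (vecMulVec x x) = x ⬝ᵥ x := by
    intro x
    simp [Matrix.trace, vecMulVec_apply, dotProduct, Fin.sum_univ_three, Matrix.diag]
  have htr : A.trace = lam1 + lam2 + lam3 := by
    rw [hAmat]
    simp only [Matrix.trace_add, Matrix.trace_smul, htrv, hn1, hn2, hn3, smul_eq_mul, mul_one]
  -- orthogonality symmetric versions
  have ho21 : v2 ⬝ᵥ v1 = 0 := by rw [dotProduct_comm]; exact ho12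
  have ho31 : v3 ⬝ᵥ v1 = 0 := by rw [dotProduct_comm]; exact ho13
  have ho32 : v3 ⬝ᵥ v2 = 0 := by rw [dotProduct_comm]; exact ho23
  -- u facts
  have huu : u ⬝ᵥ u = α1 ^ 2 + α2 ^ 2 + α3 ^ 2 := by
    rw [hu]
    simp only [dotProduct_add, add_dotProduct, dotProduct_smul, smul_dotProduct, smul_eq_mul,
      hn1, hn2, hn3, ho12, ho13, ho23, ho21, ho31, ho32]
    ring
  have hAu : A *ᵥ u = (α1 * lam1) • v1 + (α2 * lam2) • v2 + (α3 * lam3) • v3 := by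
    rw [hu, mulVec_add, mulVec_add, mulVec_smul, mulVec_smul, mulVec_smul, hv1, hv2, hv3,
      smul_smul, smul_smul, smul_smul]
  have huAu : u ⬝ᵥ (A *ᵥ u) = α1 ^ 2 * lam1 + α2 ^ 2 * lam2 + α3 ^ 2 * lam3 := by
    rw [hAu, hu]
    simp only [dotProduct_add, add_dotProduct, dotProduct_smul, smul_dotProduct, smul_eq_mul,
      hn1, hn2, hn3, ho12, ho13, ho23, ho21, ho31, ho32]
    ring
  rintro v ⟨hvn, lam, hvA⟩
  -- decomposition of v
  have hdec : v = (v1 ⬝ᵥ v) • v1 + (v2 ⬝ᵥ v) • v2 + (v3 ⬝ᵥ v) • v3 := by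
    have h := congrArg (fun M : M3 => M *ᵥ v) hP
    simp only [add_mulVec, vmv_mulVec, one_mulVec] at h
    exact h.symm
  -- eigen relations
  have hrel : ∀ (w : V3) (μ : ℝ), A *ᵥ w = μ • w → μ * (w ⬝ᵥ v) = lam * (w ⬝ᵥ v) := by
    intro w μ hw
    have h1 : w ⬝ᵥ (A *ᵥ v) = lam * (w ⬝ᵥ v) := by
      rw [hvA, dotProduct_smul, smul_eq_mul]
    have h2 : w ⬝ᵥ (A *ᵥ v) = μ * (w ⬝ᵥ v) := by
      rw [sym_dot, hA.eq, hw, smul_dotProduct, smul_eq_mul]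
    rw [← h1, h2]
  have e1 := hrel v1 lam1 hv1
  have e2 := hrel v2 lam2 hv2
  have e3 := hrel v3 lam3 hv3
  -- sum of squares
  have hcs : (v1 ⬝ᵥ v) ^ 2 + (v2 ⬝ᵥ v) ^ 2 + (v3 ⬝ᵥ v) ^ 2 = 1 := by
    have h := hvn
    nth_rewrite 1 [hdec] at h
    nth_rewrite 4 [hdec] at h
    simp only [dotProduct_add, add_dotProduct, dotProduct_smul, smul_dotProduct, smul_eq_mul,
      hn1, hn2, hn3, ho12, ho13, ho23, ho21, ho31, ho32] at h
    linear_combination h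
  -- v ⬝ᵥ u
  have hvu : v ⬝ᵥ u = (v1 ⬝ᵥ v) * α1 + (v2 ⬝ᵥ v) * α2 + (v3 ⬝ᵥ v) * α3 := by
    rw [hu]
    nth_rewrite 1 [hdec]
    simp only [dotProduct_add, add_dotProduct, dotProduct_smul, smul_dotProduct, smul_eq_mul,
      hn1, hn2, hn3, ho12, ho13, ho23, ho21, ho31, ho32]
    ring
  have hvAv : v ⬝ᵥ (A *ᵥ v) = lam := by
    rw [hvA, dotProduct_smul, smul_eq_mul, hvn, mul_one]
  -- the three cases
  rw [Delta_expand, htr, huu, huAu, hvAv, hvu]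
  obtain ⟨c1, hg1⟩ : ∃ c, v1 ⬝ᵥ v = c := ⟨_, rfl⟩
  obtain ⟨c2, hg2⟩ : ∃ c, v2 ⬝ᵥ v = c := ⟨_, rfl⟩
  obtain ⟨c3, hg3⟩ : ∃ c, v3 ⬝ᵥ v = c := ⟨_, rfl⟩
  rw [hg1] at e1 hcs ⊢
  rw [hg2] at e2 hcs ⊢
  rw [hg3] at e3 hcs ⊢
  by_cases hc1 : c1 = 0
  · by_cases hc2 : c2 = 0
    · -- c3 case: lam = lam3, c3 ^ 2 = 1
      have hc3sq : c3 ^ 2 = 1 := by rw [hc1, hc2] at hcs; nlinarith [hcs]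
      have hc3 : c3 ≠ 0 := by intro h; rw [h] at hc3sq; norm_num at hc3sq
      have hlam : lam = lam3 := (mul_right_cancel₀ hc3 e3).symm
      rw [hlam, hc1, hc2]
      apply ge_of_eq
      have hsq : (0 * α1 + 0 * α2 + c3 * α3) * (0 * α1 + 0 * α2 + c3 * α3) = α3 ^ 2 := by
        linear_combination (α3 ^ 2) * hc3sq
      rw [hsq, hα1, hα2, hα3]
      linear_combination (-2*(lam1+lam2-lam3)) * mul_inv_cancel₀ hS
    · have hlam : lam = lam2 := (mul_right_cancel₀ hc2 e2).symm
      have hc3 : c3 = 0 := by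
        have := e3
        rw [hlam] at this
        have h2 : (lam3 - lam2) * c3 = 0 := by linarith
        rcases mul_eq_zero.mp h2 with h | h
        · exfalso; linarith
        · exact h
      have hc2sq : c2 ^ 2 = 1 := by rw [hc1, hc3] at hcs; nlinarith [hcs]
      rw [hlam, hc1, hc3]
      apply ge_of_eq
      have hsq : (0 * α1 + c2 * α2 + 0 * α3) * (0 * α1 + c2 * α2 + 0 * α3) = α2 ^ 2 := by
        linear_combination (α2 ^ 2) * hc2sq
      rw [hsq, hα1, hα2, hα3]
      linear_combination (-2*(lam1+lam3-lam2)) * mul_inv_cancel₀ hS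
  · have hlam : lam = lam1 := (mul_right_cancel₀ hc1 e1).symm
    have hc2 : c2 = 0 := by
      have := e2
      rw [hlam] at this
      have h2 : (lam2 - lam1) * c2 = 0 := by linarith
      rcases mul_eq_zero.mp h2 with h | h
      · exfalso; linarith
      · exact h
    have hc3 : c3 = 0 := by
      have := e3
      rw [hlam] at this
      have h2 : (lam3 - lam1) * c3 = 0 := by linarith
      rcases mul_eq_zero.mp h2 with h | h
      · exfalso; linarith
      · exact h
    have hc1sq : c1 ^ 2 = 1 := by rw [hc2, hc3] at hcs; nlinarith [hcs]
    rw [hlam, hc2, hc3]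
    apply ge_of_eq
    have hsq : (c1 * α1 + 0 * α2 + 0 * α3) * (c1 * α1 + 0 * α2 + 0 * α3) = α1 ^ 2 := by
      linear_combination (α1 ^ 2) * hc1sq
    rw [hsq, hα1, hα2, hα3]
    linear_combination (-2*(lam2+lam3-lam1)) * mul_inv_cancel₀ hS
end
end
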